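/- Let A be SPD and suppose a solver computes, for any right-hand side z, an approximation v' to v = A^{-1} z with ‖v' - v‖_A ≤ ε‖v‖_A. Define iteratively v₁' as the solver output for A^{-1}f and v_{j+1}' as the solver output applied to right-hand side v_j'. Then ‖v_β' - A^{-β} f‖_A ≤ a_β ε ‖A^{-β} f‖_A, where a₁ = 1 and a_{β+1} = 1 + (1+ε) k(A) a_β. Consequently a_β = O(k(A)^{β-1}). -/

import Mathlib

open Matrix Real

/-- Spectral real power of an SPD matrix given by `A = W D Wᵀ`: `A^γ := W D^γ Wᵀ`. -/
noncomputable def matPow {N : ℕ} (W : Matrix (Fin N) (Fin N) ℝ) (D : Fin N → ℝ) (γ : ℝ) :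
    Matrix (Fin N) (Fin N) ℝ :=
  W * Matrix.diagonal (fun i => D i ^ γ) * Wᵀ

/-- The norm `‖v‖_{A^γ} = sqrt (vᵀ A^γ v)`. -/
noncomputable def wnorm {N : ℕ} (W : Matrix (Fin N) (Fin N) ℝ) (D : Fin N → ℝ) (γ : ℝ)
    (v : Fin N → ℝ) : ℝ :=
  Real.sqrt (v ⬝ᵥ (matPow W D γ).mulVec v)

/-- Coordinates of `v` in the eigenbasis, scaled by `√D`. -/
noncomputable def emb {N : ℕ} (W : Matrix (Fin N) (Fin N) ℝ) (D : Fin N → ℝ)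
    (v : Fin N → ℝ) : EuclideanSpace ℝ (Fin N) :=
  WithLp.toLp 2 (fun i => Real.sqrt (D i) * (Wᵀ.mulVec v) i)

lemma emb_sub {N : ℕ} (W : Matrix (Fin N) (Fin N) ℝ) (D : Fin N → ℝ) (u v : Fin N → ℝ) :
    emb W D (u - v) = emb W D u - emb W D v := by
  ext i
  simp [emb, Matrix.mulVec_sub]
  ring

lemma emb_add {N : ℕ} (W : Matrix (Fin N) (Fin N) ℝ) (D : Fin N → ℝ) (u v : Fin N → ℝ) :
    emb W D (u + v) = emb W D u + emb W D v := by
  ext i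
  simp [emb, Matrix.mulVec_add]
  ring

lemma wnorm_one_eq {N : ℕ} (W : Matrix (Fin N) (Fin N) ℝ) (D : Fin N → ℝ)
    (hD : ∀ i, 0 < D i) (v : Fin N → ℝ) :
    wnorm W D 1 v = ‖emb W D v‖ := by
  rw [wnorm, EuclideanSpace.norm_eq]
  congr 1
  simp only [matPow, emb, Real.rpow_one]
  rw [← Matrix.mulVec_mulVec, ← Matrix.mulVec_mulVec, Matrix.dotProduct_mulVec,
    ← Matrix.mulVec_transpose]
  simp [Matrix.mulVec_diagonal, dotProduct, Real.norm_eq_abs]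
  congr 1; funext i
  rw [mul_pow, sq_abs, sq_abs, Real.sq_sqrt (hD i).le]
  ring

lemma emb_matPow {N : ℕ} (W : Matrix (Fin N) (Fin N) ℝ) (D : Fin N → ℝ) (hW : Wᵀ * W = 1)
    (γ : ℝ) (v : Fin N → ℝ) (i : Fin N) :
    emb W D ((matPow W D γ).mulVec v) i = D i ^ γ * emb W D v i := by
  simp only [emb, matPow]
  rw [Matrix.mulVec_mulVec, ← Matrix.mul_assoc, ← Matrix.mul_assoc, hW, Matrix.one_mul,
    ← Matrix.mulVec_mulVec]
  simp [Matrix.mulVec_diagonal]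
  ring

lemma matPow_mul_matPow {N : ℕ} (W : Matrix (Fin N) (Fin N) ℝ) (D : Fin N → ℝ)
    (hW : Wᵀ * W = 1) (hD : ∀ i, 0 < D i) (γ δ : ℝ) :
    matPow W D γ * matPow W D δ = matPow W D (γ + δ) := by
  simp only [matPow]
  simp only [Matrix.mul_assoc]
  rw [← Matrix.mul_assoc Wᵀ W, hW, Matrix.one_mul,
    ← Matrix.mul_assoc (Matrix.diagonal _) (Matrix.diagonal _), Matrix.diagonal_mul_diagonal]
  have h : (fun i => D i ^ γ * D i ^ δ) = fun i => D i ^ (γ + δ) :=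
    funext fun i => (Real.rpow_add (hD i) _ _).symm
  rw [h]

lemma euclidean_scale_le {N : ℕ} [NeZero N] (s : Fin N → ℝ) (C : ℝ) (hC : ∀ i, |s i| ≤ C)
    (x y : EuclideanSpace ℝ (Fin N)) (hy : ∀ i, y i = s i * x i) :
    ‖y‖ ≤ C * ‖x‖ := by
  have hC0 : 0 ≤ C := le_trans (abs_nonneg _) (hC ⟨0, Nat.pos_of_ne_zero (NeZero.ne N)⟩)
  rw [EuclideanSpace.norm_eq, EuclideanSpace.norm_eq]
  simp only [hy]
  rw [← Real.sqrt_sq hC0, ← Real.sqrt_mul (by positivity)]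
  apply Real.sqrt_le_sqrt
  rw [Finset.mul_sum]
  apply Finset.sum_le_sum
  intro i _
  simp only [Real.norm_eq_abs, abs_mul]
  calc (|s i| * |x i|) ^ 2 = |s i|^2 * |x i|^2 := by ring
    _ ≤ C^2 * |x i|^2 := by
        apply mul_le_mul_of_nonneg_right _ (by positivity)
        exact pow_le_pow_left₀ (abs_nonneg _) (hC i) 2
    _ = C^2 * ‖x i‖^2 := by rw [Real.norm_eq_abs]

/-- Iterated inexact inversion: a solver with relative `A`-norm accuracy `ε` applied `β`
times to compute `A^{-β} f` produces an error `≤ a_β ε ‖A^{-β} f‖_A`, where `a₁ = 1`,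
`a_{β+1} = 1 + (1+ε) k(A) a_β`; consequently `a_β = O(k(A)^{β-1})`. -/
theorem stmt7 {N : ℕ} [NeZero N] (W : Matrix (Fin N) (Fin N) ℝ) (D : Fin N → ℝ)
    (hW : Wᵀ * W = 1) (hD : ∀ i, 0 < D i)
    (ε : ℝ) (hε : 0 < ε)
    (solver : (Fin N → ℝ) → (Fin N → ℝ))
    (hsolver : ∀ zz : Fin N → ℝ,
      wnorm W D 1 (solver zz - (matPow W D (-1)).mulVec zz) ≤
        ε * wnorm W D 1 ((matPow W D (-1)).mulVec zz))
    (kA : ℝ) (hkA : kA = (⨆ i, D i) / (⨅ i, D i))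
    (f : Fin N → ℝ)
    (vs : ℕ → Fin N → ℝ) (hvs1 : vs 1 = solver f)
    (hvsS : ∀ j, 1 ≤ j → vs (j + 1) = solver (vs j))
    (a : ℕ → ℝ) (ha1 : a 1 = 1)
    (haS : ∀ b, 1 ≤ b → a (b + 1) = 1 + (1 + ε) * kA * a b) :
    (∀ β, 1 ≤ β →
      wnorm W D 1 (vs β - (matPow W D (-(β : ℝ))).mulVec f) ≤
        a β * ε * wnorm W D 1 ((matPow W D (-(β : ℝ))).mulVec f)) ∧
    (∀ β, 1 ≤ β → a β ≤ (β : ℝ) * ((1 + ε) * kA) ^ (β - 1)) := by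
  set M : ℝ := ⨆ i, D i with hM
  set m : ℝ := ⨅ i, D i with hm
  have i0 : Fin N := ⟨0, Nat.pos_of_ne_zero (NeZero.ne N)⟩
  -- basic spectral bounds
  obtain ⟨imin, himin⟩ := Finite.exists_min D
  have hm_le : ∀ i, m ≤ D i := fun i =>
    ciInf_le ⟨D imin, by rintro _ ⟨j, rfl⟩; exact himin j⟩ i
  have hle_M : ∀ i, D i ≤ M := fun i => le_ciSup (Set.Finite.bddAbove (Set.finite_range D)) i
  have hm_pos : 0 < m := lt_of_lt_of_le (hD imin) (le_ciInf himin)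
  have hM_pos : 0 < M := lt_of_lt_of_le (hD i0) (hle_M i0)
  have hmM : m ≤ M := (hm_le i0).trans (hle_M i0)
  have hkA1 : 1 ≤ kA := by rw [hkA]; rw [le_div_iff₀ hm_pos]; simpa using hmM
  have hkAm : kA * m = M := by rw [hkA]; field_simp
  -- norm facts
  have hn_nonneg : ∀ v, 0 ≤ wnorm W D 1 v := fun v => Real.sqrt_nonneg _
  have habs_inv : ∀ i, |D i ^ (-1 : ℝ)| ≤ m⁻¹ := by
    intro i
    rw [Real.rpow_neg_one, abs_of_pos (inv_pos.mpr (hD i))]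
    exact inv_anti₀ hm_pos (hm_le i)
  have key1 : ∀ w, wnorm W D 1 ((matPow W D (-1)).mulVec w) ≤ m⁻¹ * wnorm W D 1 w := by
    intro w
    rw [wnorm_one_eq W D hD, wnorm_one_eq W D hD]
    exact euclidean_scale_le _ _ habs_inv _ _ (fun i => emb_matPow W D hW (-1) w i)
  have key2 : ∀ w, wnorm W D 1 w ≤ M * wnorm W D 1 ((matPow W D (-1)).mulVec w) := by
    intro w
    rw [wnorm_one_eq W D hD, wnorm_one_eq W D hD]
    refine euclidean_scale_le D M (fun i => by rw [abs_of_pos (hD i)]; exact hle_M i) _ _ ?_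
    intro i
    rw [emb_matPow W D hW (-1) w i, Real.rpow_neg_one, ← mul_assoc,
      mul_inv_cancel₀ (hD i).ne', one_mul]
  have tri : ∀ u v : Fin N → ℝ, wnorm W D 1 (u + v) ≤ wnorm W D 1 u + wnorm W D 1 v := by
    intro u v
    rw [wnorm_one_eq W D hD, wnorm_one_eq W D hD, wnorm_one_eq W D hD, emb_add]
    exact norm_add_le _ _
  -- nonnegativity of a
  have ha_nonneg : ∀ b, 1 ≤ b → 0 ≤ a b := by
    intro b hb
    induction b, hb using Nat.le_induction with
    | base => rw [ha1]; norm_num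
    | succ b hb ih =>
      rw [haS b hb]
      have : 0 ≤ (1 + ε) * kA := by nlinarith
      nlinarith
  constructor
  · intro β hβ
    induction β, hβ using Nat.le_induction with
    | base =>
      rw [hvs1, ha1, one_mul]
      have h1 : -((1 : ℕ) : ℝ) = (-1 : ℝ) := by norm_num
      rw [h1]
      exact hsolver f
    | succ β hβ ih =>
      -- rewrite matPow (-(β+1)) = matPow (-1) * matPow (-β)
      have hsum : (-1 : ℝ) + (-(β : ℝ)) = -(((β + 1 : ℕ) : ℝ)) := by push_cast; ring
      have hmat : matPow W D (-(((β + 1 : ℕ) : ℝ))) =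
          matPow W D (-1) * matPow W D (-(β : ℝ)) := by
        rw [matPow_mul_matPow W D hW hD, hsum]
      set uβ : Fin N → ℝ := (matPow W D (-(β : ℝ))).mulVec f with huβ
      set u' : Fin N → ℝ := (matPow W D (-(((β + 1 : ℕ) : ℝ)))).mulVec f with hu'
      have hu'2 : u' = (matPow W D (-1)).mulVec uβ := by
        rw [hu', hmat, ← Matrix.mulVec_mulVec]
      set e : Fin N → ℝ := solver (vs β) - (matPow W D (-1)).mulVec (vs β) with he
      have hsplit : vs (β + 1) - u' = e + (matPow W D (-1)).mulVec (vs β - uβ) := by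
        rw [hvsS β hβ, hu'2, he, Matrix.mulVec_sub]
        abel
      have hAv : (matPow W D (-1)).mulVec (vs β) =
          u' + (matPow W D (-1)).mulVec (vs β - uβ) := by
        rw [hu'2, Matrix.mulVec_sub]
        abel
      set E : ℝ := wnorm W D 1 (vs β - uβ) with hE
      set U : ℝ := wnorm W D 1 uβ with hU
      set U' : ℝ := wnorm W D 1 u' with hU'
      have h1 : wnorm W D 1 (vs (β + 1) - u') ≤
          ε * wnorm W D 1 ((matPow W D (-1)).mulVec (vs β)) + m⁻¹ * E := by
        rw [hsplit]
        calc wnorm W D 1 (e + (matPow W D (-1)).mulVec (vs β - uβ))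
            ≤ wnorm W D 1 e + wnorm W D 1 ((matPow W D (-1)).mulVec (vs β - uβ)) := tri _ _
          _ ≤ ε * wnorm W D 1 ((matPow W D (-1)).mulVec (vs β)) + m⁻¹ * E :=
              add_le_add (hsolver (vs β)) (key1 _)
      have h2 : wnorm W D 1 ((matPow W D (-1)).mulVec (vs β)) ≤ U' + m⁻¹ * E := by
        rw [hAv]
        exact (tri _ _).trans (add_le_add le_rfl (key1 _))
      have h3 : E ≤ a β * ε * U := ih
      have h4 : U ≤ M * U' := by rw [hU, hU', hu'2]; exact key2 uβ
      -- combine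
      have hεS : ε * wnorm W D 1 ((matPow W D (-1)).mulVec (vs β)) ≤
          ε * (U' + m⁻¹ * E) := mul_le_mul_of_nonneg_left h2 hε.le
      have hEY : E ≤ a β * ε * (M * U') := by
        refine h3.trans ?_
        linarith [mul_le_mul_of_nonneg_left h4 (mul_nonneg (ha_nonneg β hβ) hε.le)]
      have hX : m⁻¹ * E ≤ kA * a β * ε * U' := by
        have h5 : m⁻¹ * E ≤ m⁻¹ * (a β * ε * (M * U')) :=
          mul_le_mul_of_nonneg_left hEY (by positivity)
        have h6 : m⁻¹ * (a β * ε * (M * U')) = kA * a β * ε * U' := by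
          rw [← hkAm]
          field_simp
        linarith
      have hεX : ε * (m⁻¹ * E) ≤ ε * (kA * a β * ε * U') :=
        mul_le_mul_of_nonneg_left hX hε.le
      rw [haS β hβ]
      nlinarith [h1, hεS, hX, hεX]
  · intro β hβ
    have hx1 : (1 : ℝ) ≤ (1 + ε) * kA := by nlinarith
    have hx0 : (0 : ℝ) ≤ (1 + ε) * kA := by linarith
    induction β, hβ using Nat.le_induction with
    | base => simp [ha1]
    | succ β hβ ih =>
      rw [haS β hβ]
      have hsub : β + 1 - 1 = β := rfl
      rw [hsub]
      have hpow : (1 + ε) * kA * ((β : ℝ) * ((1 + ε) * kA) ^ (β - 1)) =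
          (β : ℝ) * ((1 + ε) * kA) ^ β := by
        rw [mul_comm ((1 + ε) * kA), mul_assoc, ← pow_succ ((1 + ε) * kA),
          Nat.sub_add_cancel hβ]
      have h7 : (1 + ε) * kA * a β ≤ (β : ℝ) * ((1 + ε) * kA) ^ β := by
        rw [← hpow]
        exact mul_le_mul_of_nonneg_left ih hx0
      have h8 : (1 : ℝ) ≤ ((1 + ε) * kA) ^ β := one_le_pow₀ hx1
      push_cast
      nlinarith [h7, h8]
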